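/- The kernel of the linear map A sending a signed measure on 𝒯×𝒳×𝒴 to its pair of (T,X)- and (T,Y)-marginals has, for fixed x0 ∈ 𝒳 and y0 ∈ 𝒴, the basis Γ = {γ_{t;x,x0;y,y0} : x ∈ 𝒳∖{x0}, y ∈ 𝒴∖{y0}, t ∈ 𝒯}, where γ_{t;x,x';y,y'} = δ_{t,x,y} + δ_{t,x',y'} − δ_{t,x,y'} − δ_{t,x',y}. In particular, dim ker(A) = |𝒯|·(|𝒳|−1)·(|𝒴|−1). -/

import Mathlib

open scoped BigOperators
noncomputable section

variable {T X Y : Type*}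

/-- `γ_{t;x,x';y,y'} = δ_{t,x,y} + δ_{t,x',y'} − δ_{t,x,y'} − δ_{t,x',y}`, where
`δ_{t,x,y}` is the point mass at `(t,x,y)`. -/
def gam [DecidableEq T] [DecidableEq X] [DecidableEq Y]
    (t : T) (x x' : X) (y y' : Y) : T → X → Y → ℝ := fun s u v =>
  (if s = t ∧ u = x ∧ v = y then (1 : ℝ) else 0) +
    (if s = t ∧ u = x' ∧ v = y' then 1 else 0) -
    (if s = t ∧ u = x ∧ v = y' then 1 else 0) -
    (if s = t ∧ u = x' ∧ v = y then 1 else 0)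

/-- The linear map sending a (signed) measure on `𝒯 × 𝒳 × 𝒴` to its pair of
`(T,X)`- and `(T,Y)`-marginals. -/
def margMap [Fintype X] [Fintype Y] :
    (T → X → Y → ℝ) →ₗ[ℝ] ((T → X → ℝ) × (T → Y → ℝ)) where
  toFun μ := (fun t x => ∑ y, μ t x y, fun t y => ∑ x, μ t x y)
  map_add' μ ν := by
    refine Prod.ext ?_ ?_ <;> funext t z <;> simp [Finset.sum_add_distrib]
  map_smul' c μ := by
    refine Prod.ext ?_ ?_ <;> funext t z <;> simp [Finset.mul_sum]

lemma gam_eq [DecidableEq T] [DecidableEq X] [DecidableEq Y]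
    (t : T) (x x' : X) (y y' : Y) (s : T) (u : X) (v : Y) :
    gam t x x' y y' s u v =
      (if s = t then (1:ℝ) else 0) *
        ((if u = x then (1:ℝ) else 0) - (if u = x' then 1 else 0)) *
        ((if v = y then (1:ℝ) else 0) - (if v = y' then 1 else 0)) := by
  simp only [gam]
  split_ifs <;> simp_all

lemma gam_mem [Fintype X] [Fintype Y] [DecidableEq T] [DecidableEq X] [DecidableEq Y]
    (t : T) (x x0 : X) (y y0 : Y) :
    gam t x x0 y y0 ∈ LinearMap.ker (margMap (T := T) (X := X) (Y := Y)) := by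
  rw [LinearMap.mem_ker]
  refine Prod.ext ?_ ?_ <;> funext s w <;>
    simp only [margMap, LinearMap.coe_mk, AddHom.coe_mk, gam_eq, Prod.fst, Prod.snd]
  · rw [← Finset.mul_sum]
    simp [Finset.sum_sub_distrib]
  · have : ∀ u : X,
        (if s = t then (1:ℝ) else 0) *
          ((if u = x then (1:ℝ) else 0) - (if u = x0 then 1 else 0)) *
          ((if w = y then (1:ℝ) else 0) - (if w = y0 then 1 else 0)) =
        ((if s = t then (1:ℝ) else 0) *
          ((if w = y then (1:ℝ) else 0) - (if w = y0 then 1 else 0))) *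
          ((if u = x then (1:ℝ) else 0) - (if u = x0 then 1 else 0)) := fun u => by ring
    simp_rw [this]
    rw [← Finset.mul_sum]
    simp [Finset.sum_sub_distrib]

lemma sum_subtype_ne {α : Type*} [Fintype α] [DecidableEq α] (a0 : α) (g : α → ℝ)
    (h : g a0 = 0) : ∑ x : {x // x ≠ a0}, g ↑x = ∑ x, g x := by
  rw [← Finset.sum_subtype (Finset.univ.erase a0) (by simp) g]
  exact Finset.sum_erase _ h

lemma key [Fintype T] [Fintype X] [Fintype Y] [DecidableEq T] [DecidableEq X] [DecidableEq Y]
    (x0 : X) (y0 : Y) (μ : T → X → Y → ℝ)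
    (hrow : ∀ s u, ∑ v, μ s u v = 0) (hcol : ∀ s v, ∑ u, μ s u v = 0)
    (s : T) (u : X) (v : Y) :
    ∑ i : T × {x : X // x ≠ x0} × {y : Y // y ≠ y0},
      μ i.1 i.2.1.1 i.2.2.1 * gam i.1 i.2.1.1 x0 i.2.2.1 y0 s u v = μ s u v := by
  have h1 : ∀ (t : T) (x : X),
      ∑ y : Y, μ t x y * ((if v = y then (1:ℝ) else 0) - (if v = y0 then 1 else 0))
        = μ t x v := by
    intro t x
    simp_rw [mul_sub]
    rw [Finset.sum_sub_distrib, ← Finset.sum_mul, hrow]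
    simp [Finset.sum_ite_eq]
  have h2 : ∀ t : T,
      ∑ x : X, ((if u = x then (1:ℝ) else 0) - (if u = x0 then 1 else 0)) * μ t x v
        = μ t u v := by
    intro t
    simp_rw [sub_mul]
    rw [Finset.sum_sub_distrib, ← Finset.mul_sum, hcol]
    simp [Finset.sum_ite_eq]
  calc ∑ i : T × {x : X // x ≠ x0} × {y : Y // y ≠ y0},
      μ i.1 i.2.1.1 i.2.2.1 * gam i.1 i.2.1.1 x0 i.2.2.1 y0 s u v
      = ∑ t : T, ∑ x : {x : X // x ≠ x0}, ∑ y : {y : Y // y ≠ y0},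
          (if s = t then (1:ℝ) else 0) *
            (((if u = ↑x then (1:ℝ) else 0) - (if u = x0 then 1 else 0)) *
              (μ t ↑x ↑y * ((if v = ↑y then (1:ℝ) else 0) - (if v = y0 then 1 else 0)))) := by
        rw [Fintype.sum_prod_type]
        refine Finset.sum_congr rfl fun t _ => ?_
        rw [Fintype.sum_prod_type]
        refine Finset.sum_congr rfl fun x _ => Finset.sum_congr rfl fun y _ => ?_
        rw [gam_eq]; ring
    _ = ∑ t : T, ∑ x : X, ∑ y : Y,
          (if s = t then (1:ℝ) else 0) *
            (((if u = x then (1:ℝ) else 0) - (if u = x0 then 1 else 0)) *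
              (μ t x y * ((if v = y then (1:ℝ) else 0) - (if v = y0 then 1 else 0)))) := by
        refine Finset.sum_congr rfl fun t _ => ?_
        have inner : ∀ x : X,
            ∑ y : {y : Y // y ≠ y0},
              (if s = t then (1:ℝ) else 0) *
                (((if u = x then (1:ℝ) else 0) - (if u = x0 then 1 else 0)) *
                  (μ t x ↑y * ((if v = ↑y then (1:ℝ) else 0) - (if v = y0 then 1 else 0))))
            = ∑ y : Y,
              (if s = t then (1:ℝ) else 0) *
                (((if u = x then (1:ℝ) else 0) - (if u = x0 then 1 else 0)) *
                  (μ t x y * ((if v = y then (1:ℝ) else 0) - (if v = y0 then 1 else 0)))) :=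
          fun x => sum_subtype_ne y0
            (fun y : Y =>
              (if s = t then (1:ℝ) else 0) *
                (((if u = x then (1:ℝ) else 0) - (if u = x0 then 1 else 0)) *
                  (μ t x y * ((if v = y then (1:ℝ) else 0) - (if v = y0 then 1 else 0)))))
            (by simp)
        calc ∑ x : {x : X // x ≠ x0}, ∑ y : {y : Y // y ≠ y0}, _
            = ∑ x : {x : X // x ≠ x0}, ∑ y : Y,
              (if s = t then (1:ℝ) else 0) *
                (((if u = ↑x then (1:ℝ) else 0) - (if u = x0 then 1 else 0)) *
                  (μ t ↑x y * ((if v = y then (1:ℝ) else 0) - (if v = y0 then 1 else 0)))) :=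
              Finset.sum_congr rfl fun x _ => inner ↑x
          _ = _ := sum_subtype_ne x0
              (fun x : X => ∑ y : Y,
                (if s = t then (1:ℝ) else 0) *
                  (((if u = x then (1:ℝ) else 0) - (if u = x0 then 1 else 0)) *
                    (μ t x y * ((if v = y then (1:ℝ) else 0) - (if v = y0 then 1 else 0)))))
              (by simp)
    _ = μ s u v := by
        simp_rw [← Finset.mul_sum, h1, h2]
        simp [Finset.sum_ite_eq]

/-- For fixed `x0 ∈ 𝒳`, `y0 ∈ 𝒴`, the family
`Γ = {γ_{t;x,x0;y,y0} : x ≠ x0, y ≠ y0, t ∈ 𝒯}` is a basis of `ker(A)`, where `A`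
is the marginal map; in particular
`dim ker(A) = |𝒯| · (|𝒳|−1) · (|𝒴|−1)`. -/
theorem ker_margMap_basis [Fintype T] [Fintype X] [Fintype Y]
    [DecidableEq T] [DecidableEq X] [DecidableEq Y] (x0 : X) (y0 : Y) :
    (∃ b : Module.Basis (T × {x : X // x ≠ x0} × {y : Y // y ≠ y0}) ℝ
        (LinearMap.ker (margMap (T := T) (X := X) (Y := Y))),
      ∀ i, (b i : T → X → Y → ℝ) = gam i.1 i.2.1.1 x0 i.2.2.1 y0) ∧
      Module.finrank ℝ (LinearMap.ker (margMap (T := T) (X := X) (Y := Y))) =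
        Fintype.card T * (Fintype.card X - 1) * (Fintype.card Y - 1) := by
  set K := LinearMap.ker (margMap (T := T) (X := X) (Y := Y)) with hK
  let w : T × {x : X // x ≠ x0} × {y : Y // y ≠ y0} → K :=
    fun i => ⟨gam i.1 i.2.1.1 x0 i.2.2.1 y0, gam_mem _ _ _ _ _⟩
  have hli : LinearIndependent ℝ w := by
    rw [Fintype.linearIndependent_iff]
    intro g hg i
    have h0 : ∑ j, g j • gam j.1 j.2.1.1 x0 j.2.2.1 y0 = (0 : T → X → Y → ℝ) := by
      have := congrArg Subtype.val hg
      simpa [w] using this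
    obtain ⟨t, x, y⟩ := i
    have h1 := congrFun (congrFun (congrFun h0 t) ↑x) ↑y
    simp only [Finset.sum_apply, Pi.smul_apply, smul_eq_mul, Pi.zero_apply] at h1
    rw [Fintype.sum_eq_single (t, x, y)] at h1
    · simpa [gam_eq, x.2, y.2] using h1
    · rintro ⟨t', x', y'⟩ hb
      rw [gam_eq]
      rcases eq_or_ne t t' with h | h
      · rcases eq_or_ne x x' with h' | h'
        · rcases eq_or_ne y y' with h'' | h''
          · exact absurd (by rw [h, h', h'']) hb
          · have : (↑y : Y) ≠ ↑y' := fun e => h'' (Subtype.ext e)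
            simp [this, y.2]
        · have : (↑x : X) ≠ ↑x' := fun e => h' (Subtype.ext e)
          simp [this, x.2]
      · simp [h]
  have hspan : ⊤ ≤ Submodule.span ℝ (Set.range w) := by
    rintro ⟨μ, hμ⟩ -
    have hμ' : margMap (T := T) (X := X) (Y := Y) μ = 0 := hμ
    have hrow : ∀ s u, ∑ v, μ s u v = 0 := by
      intro s u
      have := congrFun (congrFun (congrArg Prod.fst hμ') s) u
      simpa [margMap] using this
    have hcol : ∀ s v, ∑ u, μ s u v = 0 := by
      intro s v
      have := congrFun (congrFun (congrArg Prod.snd hμ') s) v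
      simpa [margMap] using this
    have hrep : (⟨μ, hμ⟩ : K) = ∑ i, (μ i.1 i.2.1.1 i.2.2.1) • w i := by
      apply Subtype.ext
      have : ((∑ i, (μ i.1 i.2.1.1 i.2.2.1) • w i : K) : T → X → Y → ℝ)
          = ∑ i : T × {x : X // x ≠ x0} × {y : Y // y ≠ y0},
              (μ i.1 i.2.1.1 i.2.2.1) • gam i.1 i.2.1.1 x0 i.2.2.1 y0 := by
        simp [w]
      rw [this]
      funext s u v
      simp only [Finset.sum_apply, Pi.smul_apply, smul_eq_mul]
      exact (key x0 y0 μ hrow hcol s u v).symm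
    rw [hrep]
    exact Submodule.sum_mem _ fun i _ =>
      Submodule.smul_mem _ _ (Submodule.subset_span ⟨i, rfl⟩)
  let b := Module.Basis.mk hli hspan
  have hcard : Fintype.card (T × {x : X // x ≠ x0} × {y : Y // y ≠ y0})
      = Fintype.card T * (Fintype.card X - 1) * (Fintype.card Y - 1) := by
    have hx : Fintype.card {x : X // x ≠ x0} = Fintype.card X - 1 := by
      rw [Fintype.card_subtype_compl (· = x0), Fintype.card_subtype_eq]
    have hy : Fintype.card {y : Y // y ≠ y0} = Fintype.card Y - 1 := by
      rw [Fintype.card_subtype_compl (· = y0), Fintype.card_subtype_eq]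
    simp [Fintype.card_prod, hx, hy, mul_assoc]
  refine ⟨⟨b, fun i => by simp [b, Module.Basis.mk_apply, w]⟩, ?_⟩
  rw [Module.finrank_eq_card_basis b, hcard]
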